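/- Let ν ≥ 2 be a natural number. The function g(x) = (ν/x)·(1 − 1/x)^(ν−1) is strictly increasing on the real interval [1, ν] and strictly decreasing on the real interval [ν, ∞). -/

import Mathlib

private lemma pima_hasDerivAt (ν : ℕ) (hν : 2 ≤ ν) (x : ℝ) (hx : x ≠ 0) :
    HasDerivAt (fun x : ℝ => (ν : ℝ) / x * (1 - 1 / x) ^ (ν - 1))
      ((ν : ℝ) * (x ^ 2)⁻¹ * (1 - x⁻¹) ^ (ν - 2) * ((ν : ℝ) * x⁻¹ - 1)) x := by
  have h1 : HasDerivAt (fun x : ℝ => x⁻¹) (-(x ^ 2)⁻¹) x := hasDerivAt_inv hx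
  have h2 : HasDerivAt (fun x : ℝ => 1 - x⁻¹) ((x ^ 2)⁻¹) x := by
    simpa using h1.const_sub 1
  have h3 : HasDerivAt (fun x : ℝ => (1 - x⁻¹) ^ (ν - 1))
      ((ν - 1 : ℕ) * (1 - x⁻¹) ^ (ν - 1 - 1) * (x ^ 2)⁻¹) x := h2.pow _
  have h4 := (h1.const_mul (ν : ℝ)).mul h3
  have hk : ν - 1 - 1 = ν - 2 := by omega
  have hk2 : ν - 1 = (ν - 2) + 1 := by omega
  have hcast : ((ν - 1 : ℕ) : ℝ) = (ν : ℝ) - 1 := by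
    have : (1 : ℕ) ≤ ν := by omega
    push_cast [this]; ring
  convert h4 using 1
  · rfl
  · rfl
  · funext y; rw [div_eq_mul_inv, one_div]; rfl
  · rw [hk, hcast, hk2, pow_succ]
    ring

/-- The limiting frame efficiency `g(x) = (ν/x)·(1 − 1/x)^(ν−1)` is strictly
increasing on `[1, ν]` and strictly decreasing on `[ν, ∞)`. -/
theorem pima_frame_efficiency_monotonicity (ν : ℕ) (hν : 2 ≤ ν) :
    StrictMonoOn (fun x : ℝ => (ν : ℝ) / x * (1 - 1 / x) ^ (ν - 1)) (Set.Icc 1 (ν : ℝ)) ∧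
    StrictAntiOn (fun x : ℝ => (ν : ℝ) / x * (1 - 1 / x) ^ (ν - 1)) (Set.Ici (ν : ℝ)) := by
  have hν2 : (2 : ℝ) ≤ (ν : ℝ) := by exact_mod_cast hν
  have hcont : ∀ s : Set ℝ, (∀ y ∈ s, y ≠ 0) →
      ContinuousOn (fun x : ℝ => (ν : ℝ) / x * (1 - 1 / x) ^ (ν - 1)) s := by
    intro s hs
    exact ContinuousOn.mul (continuousOn_const.div continuousOn_id hs)
      (ContinuousOn.pow (continuousOn_const.sub (continuousOn_const.div continuousOn_id hs)) _)
  constructor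
  · apply strictMonoOn_of_deriv_pos (convex_Icc _ _)
    · exact hcont _ (fun y hy => by have := hy.1; positivity)
    · intro x hx
      rw [interior_Icc] at hx
      obtain ⟨hx1, hxν⟩ := hx
      have hx0 : x ≠ 0 := by linarith
      rw [(pima_hasDerivAt ν hν x hx0).deriv]
      have h1 : (0:ℝ) < 1 - x⁻¹ := by
        rw [sub_pos, inv_lt_one_iff₀]; right; exact hx1
      have h2 : (0:ℝ) < (ν : ℝ) * x⁻¹ - 1 := by
        rw [sub_pos]
        calc (1:ℝ) = x * x⁻¹ := by field_simp
          _ < (ν:ℝ) * x⁻¹ := by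
            apply mul_lt_mul_of_pos_right hxν
            positivity
      positivity
  · apply strictAntiOn_of_deriv_neg (convex_Ici _)
    · exact hcont _ (fun y hy => by simp only [Set.mem_Ici] at hy; intro h; rw [h] at hy; linarith)
    · intro x hx
      rw [interior_Ici] at hx
      simp only [Set.mem_Ioi] at hx
      have hx1 : (1:ℝ) < x := by linarith
      have hx0 : x ≠ 0 := by linarith
      rw [(pima_hasDerivAt ν hν x hx0).deriv]
      have h1 : (0:ℝ) < 1 - x⁻¹ := by
        rw [sub_pos, inv_lt_one_iff₀]; right; exact hx1
      have h2 : (ν : ℝ) * x⁻¹ - 1 < 0 := by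
        rw [sub_neg]
        calc (ν:ℝ) * x⁻¹ < x * x⁻¹ := by
              apply mul_lt_mul_of_pos_right hx; positivity
          _ = 1 := by field_simp
      have h3 : (0:ℝ) < (ν : ℝ) * (x ^ 2)⁻¹ * (1 - x⁻¹) ^ (ν - 2) := by positivity
      exact mul_neg_of_pos_of_neg h3 h2
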